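/- For every integer k ≥ 1 and every integer r ≥ 1, the integer r² divides the integer ∑_{d ∣ r} μ(r/d)·C((2k+1)·d − 1, d − 1). (Equivalently, the top BPS invariants b⁺_r = (1/r²)·∑_{d ∣ r} μ(r/d)·C((2k+1)d − 1, d − 1) of the twist knot K_p with p = −k ≤ −1 are integers; the case k = 1 gives the integrality of the bottom BPS invariants b⁻_r = −(1/r²)·∑_{d ∣ r} μ(r/d)·C(3d − 1, d − 1) of all twist knots K_p with p ≤ −1.) -/

import Mathlib

open Finset ArithmeticFunction

lemma filter_dvd_Ico (p n : ℕ) (hp : 0 < p) :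
    ((Finset.Ico 1 (n*p)).filter (fun j => p ∣ j)) = (Finset.Ico 1 n).image (fun i => p * i) := by
  ext j
  simp only [mem_filter, mem_Ico, mem_image]
  constructor
  · rintro ⟨⟨h1, h2⟩, i, rfl⟩
    refine ⟨i, ⟨?_, ?_⟩, rfl⟩
    · rcases Nat.eq_zero_or_pos i with rfl | h
      · omega
      · exact h
    · rw [mul_comm n p] at h2
      exact Nat.lt_of_mul_lt_mul_left h2
  · rintro ⟨i, ⟨h1, h2⟩, rfl⟩
    refine ⟨⟨?_, ?_⟩, ⟨i, rfl⟩⟩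
    · exact Nat.one_le_iff_ne_zero.2 (by positivity)
    · rw [mul_comm n p]
      exact (Nat.mul_lt_mul_left hp).2 h2

-- descending product identity
lemma desc_prod (a K : ℕ) (hK : 0 < K) :
    (a*K - 1).choose (K - 1) * ∏ j ∈ Finset.Ico 1 K, j = ∏ j ∈ Finset.Ico 1 K, (a*K - j) := by
  obtain ⟨K', rfl⟩ : ∃ K', K = K' + 1 := ⟨K - 1, by omega⟩
  rw [Finset.prod_Ico_id_eq_factorial, Nat.add_sub_cancel, mul_comm,
    ← Nat.descFactorial_eq_factorial_mul_choose, Nat.descFactorial_eq_prod_range,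
    Finset.prod_Ico_eq_prod_range]
  simp only [Nat.add_sub_cancel]
  exact Finset.prod_congr rfl fun i _ => by omega

lemma main_identity (p a n : ℕ) (hp : 0 < p) (hn : 0 < n) (ha : 0 < a) :
    (a*(n*p) - 1).choose (n*p - 1) * ∏ j ∈ (Finset.Ico 1 (n*p)).filter (fun j => ¬ p ∣ j), j
      = (a*n - 1).choose (n - 1) *
        ∏ j ∈ (Finset.Ico 1 (n*p)).filter (fun j => ¬ p ∣ j), (a*(n*p) - j) := by
  have hK : 0 < n * p := Nat.mul_pos hn hp
  have hA := desc_prod a (n*p) hK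
  have hB := desc_prod a n hn
  -- split both sides of hA
  rw [← Finset.prod_filter_mul_prod_filter_not (Finset.Ico 1 (n*p)) (fun j => p ∣ j) (fun j => j),
    ← Finset.prod_filter_mul_prod_filter_not (Finset.Ico 1 (n*p)) (fun j => p ∣ j)
      (fun j => a*(n*p) - j), filter_dvd_Ico p n hp,
    Finset.prod_image (fun x _ y _ h => Nat.eq_of_mul_eq_mul_left hp h),
    Finset.prod_image (fun x _ y _ h => Nat.eq_of_mul_eq_mul_left hp h)] at hA
  have e1 : ∀ i ∈ Finset.Ico 1 n, a * (n*p) - p * i = p * (a * n - i) := by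
    intro i _
    rw [Nat.mul_sub]
    ring_nf
  rw [Finset.prod_congr rfl e1, Finset.prod_mul_distrib, Finset.prod_mul_distrib,
    Finset.prod_const, ← hB] at hA
  have hcard : (Finset.Ico 1 n).card = n - 1 := by simp
  rw [hcard] at hA
  -- now cancel
  have hF : 0 < ∏ j ∈ Finset.Ico 1 n, j := Finset.prod_pos (fun i hi => by
    simp only [mem_Ico] at hi; omega)
  have hQ : 0 < p ^ (n-1) * ∏ j ∈ Finset.Ico 1 n, j := Nat.mul_pos (Nat.pow_pos hp) hF
  apply Nat.eq_of_mul_eq_mul_right hQ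
  ring_nf at hA ⊢
  linarith [hA]


lemma prod_congr_zmod (p a n : ℕ) (hp : p.Prime) (hn : 0 < n) (ha2 : 2 ≤ a) (hodd : Odd a) :
    ((∏ j ∈ (Finset.Ico 1 (n*p)).filter (fun j => ¬ p ∣ j), (a*(n*p) - j) : ℕ) :
        ZMod (p ^ (2 * (n*p).factorization p)))
      = ((∏ j ∈ (Finset.Ico 1 (n*p)).filter (fun j => ¬ p ∣ j), j : ℕ) :
        ZMod (p ^ (2 * (n*p).factorization p))) := by
  set K := n * p with hKdef
  set M := p ^ (2 * K.factorization p) with hMdef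
  set T := (Finset.Ico 1 K).filter (fun j => ¬ p ∣ j) with hTdef
  have hp1 : 1 < p := hp.one_lt
  have hK : 0 < K := Nat.mul_pos hn (by omega)
  have hpK : p ∣ K := ⟨n, mul_comm n p⟩
  have hXK : K ≤ a * K := Nat.le_mul_of_pos_left K (by omega)
  have hmem : ∀ j ∈ T, 1 ≤ j ∧ j < K ∧ ¬ p ∣ j := by
    intro j hj
    simp only [hTdef, mem_filter, mem_Ico] at hj
    exact ⟨hj.1.1, hj.1.2, hj.2⟩
  haveI : NeZero M := ⟨pow_ne_zero _ (by omega)⟩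
  have hK2 : ((K : ZMod M))^2 = 0 := by
    have h1 : M ∣ K^2 := by
      have h2 : p ^ K.factorization p ∣ K := Nat.ordProj_dvd K p
      have h3 := pow_dvd_pow_of_dvd h2 2
      rwa [← pow_mul, mul_comm (K.factorization p) 2] at h3
    rw [← Nat.cast_pow, ZMod.natCast_eq_zero_iff]
    exact h1
  have hunit : ∀ j ∈ T, IsUnit ((j : ℕ) : ZMod M) := by
    intro j hj
    rw [ZMod.isUnit_iff_coprime]
    exact (Nat.Coprime.pow_right _ ((hp.coprime_iff_not_dvd.2 (hmem j hj).2.2).symm))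
  rw [Nat.cast_prod, Nat.cast_prod]
  have hcast : ∀ j ∈ T, ((a * K - j : ℕ) : ZMod M) = ((a*K : ℕ) : ZMod M) - j := by
    intro j hj
    rw [Nat.cast_sub (le_trans (le_of_lt (hmem j hj).2.1) hXK)]
  rw [Finset.prod_congr rfl hcast]
  by_cases hc : p = 2 ∧ Odd n
  · -- termwise case : p = 2, n odd, M = 4
    obtain ⟨rfl, hno⟩ := hc
    have hn2 : n % 2 = 1 := Nat.odd_iff.1 hno
    have hM4 : M = 4 := by
      have hf : K.factorization 2 = 1 := by
        rw [hKdef, Nat.factorization_mul (by omega) (by omega), Finsupp.add_apply,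
          Nat.factorization_eq_zero_of_not_dvd (by omega : ¬ (2:ℕ) ∣ n),
          Nat.Prime.factorization_self (by norm_num)]
      rw [hMdef, hf]; norm_num
    refine Finset.prod_congr rfl (fun j hj => ?_)
    obtain ⟨h1, h2, h3⟩ := hmem j hj
    have hna : n * 2 ≤ n * a := Nat.mul_le_mul_left n ha2
    have hcm : n * a = a * n := mul_comm n a
    have hbj : j ≤ a * n := by omega
    obtain ⟨s, hs⟩ := hodd.mul hno
    obtain ⟨t, ht⟩ := Nat.odd_iff.2 (by omega : j % 2 = 1)
    have hXeq : a * K = (a * n) * 2 := by rw [hKdef]; ring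
    have hdvd4 : M ∣ a * K - 2 * j := by rw [hM4]; omega
    have h0 : ((a * K - 2 * j : ℕ) : ZMod M) = 0 := by
      rw [ZMod.natCast_eq_zero_iff]; exact hdvd4
    rw [Nat.cast_sub (by omega : 2 * j ≤ a * K)] at h0
    push_cast at h0 ⊢
    linear_combination h0
  · -- involution case
    set f : ℕ → ZMod M := fun j => (((a*K : ℕ) : ZMod M) - j) * ((j : ℕ) : ZMod M)⁻¹ with hfdef
    have g_mem : ∀ j ∈ T, K - j ∈ T := by
      intro j hj
      obtain ⟨h1, h2, h3⟩ := hmem j hj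
      simp only [hTdef, mem_filter, mem_Ico]
      refine ⟨⟨by omega, by omega⟩, fun hd => h3 ?_⟩
      have : K - (K - j) = j := by omega
      exact this ▸ Nat.dvd_sub hpK hd
    have key : ∀ j ∈ T, (((a*K : ℕ) : ZMod M) - j) * (((a*K : ℕ) : ZMod M) - ((K - j : ℕ) : ZMod M))
        = (j : ZMod M) * ((K - j : ℕ) : ZMod M) := by
      intro j hj
      obtain ⟨h1, h2, h3⟩ := hmem j hj
      rw [Nat.cast_sub (by omega : j ≤ K)]
      push_cast
      linear_combination ((a : ZMod M) * a - a) * hK2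
    have hg1 : ∀ j (hj : j ∈ T), f j * f (K - j) = 1 := by
      intro j hj
      have hju := hunit j hj
      have hku := hunit _ (g_mem j hj)
      rw [hfdef]
      simp only
      calc (((a*K : ℕ) : ZMod M) - j) * ((j : ℕ) : ZMod M)⁻¹ *
            ((((a*K : ℕ) : ZMod M) - ((K - j : ℕ) : ZMod M)) * (((K - j : ℕ) : ZMod M))⁻¹)
          = ((((a*K : ℕ) : ZMod M) - j) * (((a*K : ℕ) : ZMod M) - ((K - j : ℕ) : ZMod M))) *
            (((j : ℕ) : ZMod M)⁻¹ * (((K - j : ℕ) : ZMod M))⁻¹) := by ring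
        _ = ((j : ZMod M) * ((K - j : ℕ) : ZMod M)) *
            (((j : ℕ) : ZMod M)⁻¹ * (((K - j : ℕ) : ZMod M))⁻¹) := by rw [key j hj]
        _ = ((j : ZMod M) * ((j : ℕ) : ZMod M)⁻¹) *
            (((K - j : ℕ) : ZMod M) * (((K - j : ℕ) : ZMod M))⁻¹) := by ring
        _ = 1 := by rw [ZMod.mul_inv_of_unit _ hju, ZMod.mul_inv_of_unit _ hku, one_mul]
    have hg3 : ∀ j (hj : j ∈ T), f j ≠ 1 → K - j ≠ j := by
      intro j hj _ heq
      obtain ⟨h1, h2, h3⟩ := hmem j hj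
      have hK2j : K = 2 * j := by omega
      rcases eq_or_ne p 2 with hp2 | hp2
      · subst hp2
        have hn_even : ¬ Odd n := fun ho => hc ⟨rfl, ho⟩
        rw [Nat.not_odd_iff_even, Nat.even_iff] at hn_even
        exact h3 (by omega)
      · apply h3
        have hd2j : p ∣ 2 * j := hK2j ▸ hpK
        rcases (Nat.Prime.dvd_mul hp).1 hd2j with h | h
        · exact absurd ((Nat.prime_dvd_prime_iff_eq hp Nat.prime_two).1 h) hp2
        · exact h
    have hinv : ∀ j (hj : j ∈ T), K - (K - j) = j := by
      intro j hj
      obtain ⟨h1, h2, h3⟩ := hmem j hj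
      omega
    have hprod1 : ∏ j ∈ T, f j = 1 :=
      Finset.prod_involution (fun j hj => K - j) hg1 hg3 g_mem hinv
    calc ∏ j ∈ T, (((a*K : ℕ) : ZMod M) - j) = ∏ j ∈ T, (f j * j) := by
          refine Finset.prod_congr rfl (fun j hj => ?_)
          rw [hfdef]
          simp only
          rw [mul_assoc, ZMod.inv_mul_of_unit _ (hunit j hj), mul_one]
      _ = (∏ j ∈ T, f j) * ∏ j ∈ T, (j : ZMod M) := Finset.prod_mul_distrib
      _ = ∏ j ∈ T, (j : ZMod M) := by rw [hprod1, one_mul]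


lemma keyA (p a n : ℕ) (hp : p.Prime) (hn : 0 < n) (ha2 : 2 ≤ a) (hodd : Odd a) :
    ((p:ℤ) ^ (2 * (n*p).factorization p)) ∣
      ((a * (n*p) - 1).choose (n*p - 1) : ℤ) - ((a*n - 1).choose (n-1) : ℤ) := by
  have main_identity := main_identity p a n hp.pos hn (by omega)
  have pcz := prod_congr_zmod p a n hp hn ha2 hodd
  set M := p ^ (2 * (n*p).factorization p) with hMdef
  set T := (Finset.Ico 1 (n*p)).filter (fun j => ¬ p ∣ j) with hTdef
  set D := ∏ j ∈ T, j with hDdef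
  set P := ∏ j ∈ T, (a*(n*p) - j) with hPdef
  set C1 := (a*(n*p) - 1).choose (n*p - 1)
  set C0 := (a*n - 1).choose (n - 1)
  have hMpos : 0 < M := Nat.pow_pos hp.pos
  have hPD : (M:ℤ) ∣ (P:ℤ) - (D:ℤ) := by
    have h := (ZMod.natCast_eq_natCast_iff P D M).1 pcz
    exact dvd_sub_comm.1 h.dvd
  have hID : (C1:ℤ) * D = (C0:ℤ) * P := by exact_mod_cast congrArg (Nat.cast : ℕ → ℤ) main_identity
  have hdvd : (M:ℤ) ∣ ((C1:ℤ) - C0) * D := by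
    have : ((C1:ℤ) - C0) * D = (C0:ℤ) * ((P:ℤ) - D) := by linear_combination hID
    rw [this]
    exact Dvd.dvd.mul_left hPD _
  have hcop : IsCoprime (M:ℤ) (D:ℤ) := by
    rw [Nat.isCoprime_iff_coprime]
    apply Nat.Coprime.pow_left
    apply Nat.Coprime.prod_right
    intro j hj
    simp only [hTdef, mem_filter, mem_Ico] at hj
    exact hp.coprime_iff_not_dvd.2 hj.2
  have := hcop.dvd_of_dvd_mul_right hdvd
  rwa [hMdef, Nat.cast_pow] at this



/-- **Integrality of extremal BPS invariants of negative twist knots.**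
For every `k ≥ 1` and `r ≥ 1`, `r²` divides `∑_{d ∣ r} μ(r/d)·C((2k+1)d − 1, d − 1)`. -/
theorem twist_knot_neg_bps_integrality (k r : ℕ) (hk : 1 ≤ k) (hr : 1 ≤ r) :
    ((r : ℤ) ^ 2) ∣ ∑ d ∈ r.divisors,
      ArithmeticFunction.moebius (r / d) *
        (Nat.choose ((2 * k + 1) * d - 1) (d - 1) : ℤ) := by
  have hr0 : r ≠ 0 := by omega
  set a := 2 * k + 1 with hadef
  have ha2 : 2 ≤ a := by omega
  have hodd : Odd a := ⟨k, by omega⟩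
  set f : ℕ → ℤ := fun d => ((a * d - 1).choose (d - 1) : ℤ) with hfdef
  have hsum : (∑ d ∈ r.divisors, (moebius (r / d) : ℤ) * f d)
      = ∑ s ∈ r.divisors, (moebius s : ℤ) * f (r / s) := by
    rw [← Nat.sum_div_divisors r (fun s => (moebius s : ℤ) * f (r / s))]
    refine Finset.sum_congr rfl fun d hd => ?_
    rw [Nat.div_div_self (Nat.mem_divisors.1 hd).1 hr0]
  rw [show (∑ d ∈ r.divisors, (moebius (r/d) : ℤ) * (((2*k+1) * d - 1).choose (d-1) : ℤ))
      = ∑ d ∈ r.divisors, (moebius (r / d) : ℤ) * f d from rfl, hsum]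
  -- prime factorization of r^2
  have hfact : (r:ℤ)^2 = ∏ p ∈ r.primeFactors, (p:ℤ)^(2 * r.factorization p) := by
    have h1 : (r:ℕ) = ∏ p ∈ r.primeFactors, p ^ r.factorization p := by
      conv_lhs => rw [← Nat.factorization_prod_pow_eq_self hr0]
      rw [Finsupp.prod, Nat.support_factorization]
    have h2 : (r:ℤ) = ∏ p ∈ r.primeFactors, (p:ℤ) ^ r.factorization p := by
      conv_lhs => rw [h1]
      push_cast
      rfl
    rw [h2, ← Finset.prod_pow]
    exact Finset.prod_congr rfl fun p _ => by rw [← pow_mul, mul_comm]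
  rw [hfact]
  apply Finset.prod_dvd_of_coprime
  · intro p hp q hq hne
    have pp := Nat.prime_of_mem_primeFactors hp
    have qq := Nat.prime_of_mem_primeFactors hq
    exact (IsCoprime.pow (Nat.isCoprime_iff_coprime.2 ((Nat.coprime_primes pp qq).2 hne)))
  intro p hp
  have pp : p.Prime := Nat.prime_of_mem_primeFactors hp
  set e := r.factorization p with hedef
  have he : 1 ≤ e := (Nat.Prime.factorization_pos_of_dvd pp hr0
    (Nat.dvd_of_mem_primeFactors hp))
  set c := r / p ^ e with hcdef
  have hcr : p ^ e * c = r := Nat.ordProj_mul_ordCompl_eq_self r p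
  have hc0 : c ≠ 0 := Nat.pos_iff_ne_zero.1 (Nat.ordCompl_pos p hr0)
  have hpc : ¬ p ∣ c := Nat.not_dvd_ordCompl pp hr0
  set A := c.divisors with hAdef
  set B := A.image (fun t => p * t) with hBdef
  have hAdiv : ∀ t ∈ A, t ∣ c ∧ ¬ p ∣ t := by
    intro t ht
    have h1 := (Nat.mem_divisors.1 ht).1
    exact ⟨h1, fun hd => hpc (hd.trans h1)⟩
  have hAr : ∀ t ∈ A, p * t ∣ r := by
    intro t ht
    have h1 := (hAdiv t ht).1
    calc p * t ∣ p * c := mul_dvd_mul_left p h1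
      _ ∣ p ^ e * c := mul_dvd_mul_right (dvd_pow_self p (by omega)) c
      _ = r := hcr
  have hsubAB : A ∪ B ⊆ r.divisors := by
    intro s hs
    rcases Finset.mem_union.1 hs with hs | hs
    · exact Nat.mem_divisors.2 ⟨((hAdiv s hs).1).trans ⟨p ^ e, by rw [← hcr]; ring⟩, hr0⟩
    · obtain ⟨t, ht, rfl⟩ := Finset.mem_image.1 hs
      exact Nat.mem_divisors.2 ⟨hAr t ht, hr0⟩
  have hdisj : Disjoint A B := by
    rw [Finset.disjoint_left]
    intro s hsA hsB
    obtain ⟨t, ht, rfl⟩ := Finset.mem_image.1 hsB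
    exact (hAdiv _ hsA).2 ⟨t, rfl⟩
  -- sum over divisors = sum over A ∪ B
  have hvanish : ∀ s ∈ r.divisors, s ∉ A ∪ B → (moebius s : ℤ) * f (r / s) = 0 := by
    intro s hs hns
    have hmu : moebius s = 0 := by
      by_contra hmu
      have hsq : Squarefree s := moebius_ne_zero_iff_squarefree.1 hmu
      have hsr : s ∣ r := (Nat.mem_divisors.1 hs).1
      apply hns
      by_cases hps : p ∣ s
      · obtain ⟨t, rfl⟩ := hps
        have hpt : ¬ p ∣ t := by
          intro hd
          have : p * p ∣ p * t := mul_dvd_mul_left p hd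
          exact pp.one_lt.ne' (Nat.isUnit_iff.1 (hsq p this))
        have htc : t ∣ c := ((pp.coprime_iff_not_dvd.2 hpt).symm.pow_right e).dvd_of_dvd_mul_left
          (show t ∣ p ^ e * c by rw [hcr]; exact (dvd_mul_left t p).trans hsr)
        exact Finset.mem_union_right _ (Finset.mem_image.2
          ⟨t, Nat.mem_divisors.2 ⟨htc, hc0⟩, rfl⟩)
      · have hsc : s ∣ c := ((pp.coprime_iff_not_dvd.2 hps).symm.pow_right e).dvd_of_dvd_mul_left
          (show s ∣ p ^ e * c by rw [hcr]; exact hsr)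
        exact Finset.mem_union_left _ (Nat.mem_divisors.2 ⟨hsc, hc0⟩)
    rw [hmu]
    push_cast
    ring
  rw [← Finset.sum_subset hsubAB hvanish, Finset.sum_union hdisj,
    Finset.sum_image (fun x _ y _ h => Nat.eq_of_mul_eq_mul_left pp.pos h)]
  have hmup : ∀ t ∈ A, (moebius (p * t) : ℤ) = - moebius t := by
    intro t ht
    rw [ArithmeticFunction.isMultiplicative_moebius.map_mul_of_coprime
      (pp.coprime_iff_not_dvd.2 (hAdiv t ht).2), moebius_apply_prime pp]
    push_cast
    ring
  rw [← Finset.sum_add_distrib]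
  apply Finset.dvd_sum
  intro t ht
  rw [hmup t ht]
  have hterm : (moebius t : ℤ) * f (r / t) + (-(moebius t) : ℤ) * f (r / (p * t))
      = (moebius t : ℤ) * (f (r / t) - f (r / (p * t))) := by ring
  rw [hterm]
  apply Dvd.dvd.mul_left
  -- set up n = r / (p * t)
  obtain ⟨u, hu⟩ := hAr t ht
  have hu0 : u ≠ 0 := by rintro rfl; rw [Nat.mul_zero] at hu; exact hr0 hu
  have hrt1 : r / (p * t) = u := by
    rw [hu]
    exact Nat.mul_div_cancel_left u (Nat.mul_pos pp.pos (Nat.pos_of_mem_divisors ht))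
  have hrt2 : r / t = u * p := by
    rw [show r = t * (u * p) by rw [hu]; ring]
    exact Nat.mul_div_cancel_left _ (Nat.pos_of_mem_divisors ht)
  have htr : t ∣ r := (dvd_mul_left t p).trans (hAr t ht)
  have hexp : (u * p).factorization p = e := by
    rw [← hrt2, Nat.factorization_div htr, Finsupp.tsub_apply,
      Nat.factorization_eq_zero_of_not_dvd (hAdiv t ht).2]
    omega
  rw [hrt1, hrt2, hfdef]
  simp only
  have := keyA p a u pp (Nat.pos_of_ne_zero hu0) ha2 hodd
  rw [hexp] at this
  exact this
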